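/- Let P be a Laurent polynomial over ℤ in the variable a such that P - 1 is divisible by a¹² - 1 in the ring of Laurent polynomials ℤ[a, a⁻¹]. Then the span of P (the difference between the largest and smallest exponents with nonzero coefficient, with span of the zero polynomial taken to be 0) is neither 4 nor 8. -/

import Mathlib

open LaurentPolynomial

/-- The span of a Laurent polynomial: the difference between the largest and smallest
exponents appearing with nonzero coefficient (with span of `0` taken to be `0`). -/
noncomputable def laurentSpan (P : LaurentPolynomial ℤ) : ℤ :=
  (P.coeff.support.max.getD 0) - (P.coeff.support.min.getD 0)

theorem stmt_3 (P : LaurentPolynomial ℤ)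
    (h : (T 12 - 1 : LaurentPolynomial ℤ) ∣ (P - 1)) :
    laurentSpan P ≠ 4 ∧ laurentSpan P ≠ 8 := by
  -- reduce exponents mod 12
  set f : ℤ →+ ZMod 12 := (Int.castRingHom (ZMod 12)).toAddMonoidHom with hf
  set φ := AddMonoidAlgebra.mapDomainRingHom ℤ f with hφ
  have hT : φ (T 12 - 1) = 0 := by
    have : φ (T 12) = 1 := by
      have h1 : φ (T 12) = AddMonoidAlgebra.single (f 12) 1 := by
        show AddMonoidAlgebra.mapDomain f (AddMonoidAlgebra.single (12 : ℤ) (1 : ℤ)) = _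
        exact AddMonoidAlgebra.mapDomain_single
      rw [h1, show f (12 : ℤ) = 0 by decide, ← AddMonoidAlgebra.one_def]
    rw [map_sub, this, map_one, sub_self]
  have hP : φ P = 1 := by
    obtain ⟨Q, hQ⟩ := h
    have h0 : φ P - 1 = 0 := by
      calc φ P - 1 = φ (P - 1) := by rw [map_sub, map_one]
        _ = 0 := by rw [hQ, map_mul, hT, zero_mul]
    exact sub_eq_zero.mp h0
  -- main claim: span cannot be in (0, 12)
  suffices hmain : ∀ s : ℤ, laurentSpan P = s → 0 < s → s < 12 → False by
    exact ⟨fun hs => hmain 4 hs (by norm_num) (by norm_num),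
           fun hs => hmain 8 hs (by norm_num) (by norm_num)⟩
  intro s hs hs0 hs12
  -- support is nonempty
  rcases Finset.eq_empty_or_nonempty P.coeff.support with he | hne
  · have h0 : laurentSpan P = 0 := by simp only [laurentSpan, he, Finset.max_empty, Finset.min_empty]; rfl
    omega
  obtain ⟨M, hM⟩ := Finset.max_of_nonempty hne
  obtain ⟨m, hm⟩ := Finset.min_of_nonempty hne
  have hMs : M ∈ P.coeff.support := Finset.mem_of_max hM
  have hms : m ∈ P.coeff.support := Finset.mem_of_min hm
  have hspan : M - m = s := by rw [laurentSpan, hM, hm] at hs; exact hs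
  -- f is injective on the support
  have hinj : Set.InjOn f P.coeff.support := by
    intro a ha b hb hab
    have haM : a ≤ M := Finset.le_max_of_eq ha hM
    have ham : m ≤ a := Finset.min_le_of_eq ha hm
    have hbM : b ≤ M := Finset.le_max_of_eq hb hM
    have hbm : m ≤ b := Finset.min_le_of_eq hb hm
    have hd : (12 : ℤ) ∣ a - b := by
      have : ((a - b : ℤ) : ZMod 12) = 0 := by
        push_cast
        exact sub_eq_zero.mpr hab
      exact_mod_cast (ZMod.intCast_zmod_eq_zero_iff_dvd (a - b) 12).mp this
    omega
  -- support of φ P is the image of P.coeff.support, which equals {0}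
  have hsupp : P.coeff.support.image f = ({0} : Finset (ZMod 12)) := by
    have h1 : (φ P).coeff.support = P.coeff.support.image f :=
      Finsupp.mapDomain_support_of_injOn P.coeff hinj
    have h2 : (φ P).coeff.support = {0} := by
      rw [hP]
      exact Finsupp.support_single_ne_zero 0 one_ne_zero
    rw [← h1, h2]
  have hcard : P.coeff.support.card = 1 := by
    have := Finset.card_image_of_injOn hinj
    rw [hsupp] at this
    simpa using this.symm
  obtain ⟨x, hx⟩ := Finset.card_eq_one.mp hcard
  rw [hx] at hM hm
  simp at hM hm
  omega
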